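/- The function F_2 : (0,1) → ℝ defined by F_2(x) = ln x/(x−1) is a strictly decreasing bijection from the open interval (0,1) onto (1,∞); in particular, for every real y > 1 there is a unique x ∈ (0,1) with ln x/(x−1) = y. -/
import Mathlib

open Real Set

private lemma F2_log_gt (x : ℝ) (hx : x ∈ Set.Ioo (0:ℝ) 1) : 1 - x⁻¹ < Real.log x := by
  have h1 : Real.log x⁻¹ < x⁻¹ - 1 := by
    apply Real.log_lt_sub_one_of_pos (inv_pos.mpr hx.1)
    have : 1 < x⁻¹ := (one_lt_inv₀ hx.1).mpr hx.2
    linarith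
  rw [Real.log_inv] at h1
  linarith

private lemma F2_contOn (s : Set ℝ) (hs : s ⊆ Set.Ioo (0:ℝ) 1) :
    ContinuousOn (fun x : ℝ => Real.log x / (x - 1)) s := by
  apply ContinuousOn.div
  · exact Real.continuousOn_log.mono (fun x hx => by
      have := (hs hx).1; simp; linarith)
  · exact (continuousOn_id.sub continuousOn_const)
  · intro x hx
    have := (hs hx).2
    intro h; rw [sub_eq_zero] at h; linarith

theorem F2_strictAnti_bijOn :
    StrictAntiOn (fun x : ℝ => Real.log x / (x - 1)) (Set.Ioo 0 1) ∧
    Set.BijOn (fun x : ℝ => Real.log x / (x - 1)) (Set.Ioo 0 1) (Set.Ioi 1) ∧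
    ∀ y : ℝ, 1 < y → ∃! x : ℝ, x ∈ Set.Ioo (0 : ℝ) 1 ∧ Real.log x / (x - 1) = y := by
  set f : ℝ → ℝ := fun x => Real.log x / (x - 1) with hf
  -- strict antitonicity
  have hanti : StrictAntiOn f (Set.Ioo 0 1) := by
    apply strictAntiOn_of_deriv_neg (convex_Ioo 0 1) (F2_contOn _ subset_rfl)
    intro x hx
    rw [interior_Ioo] at hx
    obtain ⟨hx0, hx1⟩ := hx
    have hne : x - 1 ≠ 0 := by intro h; rw [sub_eq_zero] at h; linarith
    have hd : HasDerivAt f ((x⁻¹ * (x - 1) - Real.log x * 1) / (x - 1) ^ 2) x :=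
      (Real.hasDerivAt_log (ne_of_gt hx0)).div ((hasDerivAt_id x).sub_const 1) hne
    rw [hd.deriv]
    have hlog := F2_log_gt x ⟨hx0, hx1⟩
    have hnum : x⁻¹ * (x - 1) - Real.log x * 1 < 0 := by
      have hxi : x⁻¹ * x = 1 := inv_mul_cancel₀ (ne_of_gt hx0)
      have : x⁻¹ * (x - 1) = 1 - x⁻¹ := by field_simp
      rw [this]; linarith
    have hsq : (0:ℝ) < (x - 1) ^ 2 := by positivity
    exact div_neg_of_neg_of_pos hnum hsq
  -- maps into Ioi 1
  have hmaps : Set.MapsTo f (Set.Ioo 0 1) (Set.Ioi 1) := by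
    intro x hx
    have hlt : Real.log x < x - 1 := Real.log_lt_sub_one_of_pos hx.1 (ne_of_lt hx.2)
    have hneg : x - 1 < 0 := by linarith [hx.2]
    simp only [Set.mem_Ioi, hf]
    rw [lt_div_iff_of_neg hneg]
    linarith
  -- surjectivity onto Ioi 1
  have hsurj : ∀ y : ℝ, 1 < y → ∃ x ∈ Set.Ioo (0:ℝ) 1, f x = y := by
    intro y hy
    set a : ℝ := Real.exp (-y) with ha
    set b : ℝ := y⁻¹ with hb
    have hy0 : (0:ℝ) < y := by linarith
    have ha0 : 0 < a := Real.exp_pos _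
    have ha1 : a < 1 := by
      rw [ha, Real.exp_lt_one_iff]; linarith
    have hb1 : b < 1 := by rw [hb, inv_lt_one_iff₀]; right; exact hy
    have hb0 : 0 < b := by positivity
    have hab : a ≤ b := by
      have hexp : y < Real.exp y := by linarith [Real.add_one_le_exp y]
      have : a = (Real.exp y)⁻¹ := by rw [ha, Real.exp_neg]
      rw [this, hb]
      exact le_of_lt ((inv_lt_inv₀ (Real.exp_pos y) hy0).mpr hexp)
    -- f a ≥ y
    have hfa : y ≤ f a := by
      have hla : Real.log a = -y := Real.log_exp _
      have hna : a - 1 < 0 := by linarith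
      simp only [hf]
      rw [le_div_iff_of_neg hna, hla]
      nlinarith
    -- f b ≤ y
    have hfb : f b ≤ y := by
      have hlb : Real.log b = -Real.log y := by rw [hb, Real.log_inv]
      have hnb : b - 1 < 0 := by linarith
      have hly : Real.log y < y - 1 := Real.log_lt_sub_one_of_pos hy0 (ne_of_gt hy)
      simp only [hf]
      rw [div_le_iff_of_neg hnb, hlb]
      have hbi : b * y = 1 := inv_mul_cancel₀ (ne_of_gt hy0)
      nlinarith
    have hsub : Set.Icc a b ⊆ Set.Ioo (0:ℝ) 1 := by
      intro x hx; exact ⟨lt_of_lt_of_le ha0 hx.1, lt_of_le_of_lt hx.2 hb1⟩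
    have := intermediate_value_Icc' hab (F2_contOn _ hsub)
    have hymem : y ∈ Set.Icc (f b) (f a) := ⟨hfb, hfa⟩
    obtain ⟨x, hx, hfx⟩ := this hymem
    exact ⟨x, hsub hx, hfx⟩
  refine ⟨hanti, ⟨hmaps, hanti.injOn, ?_⟩, ?_⟩
  · intro y hy
    obtain ⟨x, hx, hfx⟩ := hsurj y hy
    exact ⟨x, hx, hfx⟩
  · intro y hy
    obtain ⟨x, hx, hfx⟩ := hsurj y hy
    refine ⟨x, ⟨hx, hfx⟩, ?_⟩
    rintro x' ⟨hx', hfx'⟩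
    exact hanti.injOn hx' hx (by show f x' = f x; rw [show f x' = Real.log x' / (x' - 1) from rfl, hfx', hfx])
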